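/- Let X be the Kaup–Kupershmidt deformation vector field and J_X its Jacobian matrix, (J_X)^i_j = ∂X^i/∂z^j. Then at every point with y ≠ 0 the matrix −(J_X·P₀ + P₀·J_Xᵀ) (which equals the Lie derivative L_X P₀ since P₀ is constant) equals the skew-symmetric matrix P₁_KK. -/

import Mathlib

open Matrix

/-- Partial derivative `∂f/∂z^l` at `z`, coordinates `z = (p_x, p_y, x, y)`. -/
noncomputable def pd (l : Fin 4) (f : (Fin 4 → ℝ) → ℝ) (z : Fin 4 → ℝ) : ℝ :=
  fderiv ℝ f z (Pi.single l 1)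

/-- The canonical Poisson tensor `P₀` in the ordering `(p_x, p_y, x, y)`. -/
def P0 : Matrix (Fin 4) (Fin 4) ℝ :=
  !![0, 0, -1, 0;
     0, 0, 0, -1;
     1, 0, 0, 0;
     0, 1, 0, 0]

/-- The Kaup–Kupershmidt deformation vector field `X`, components ordered `(p_x,p_y,x,y)`. -/
noncomputable def XKK (a ω : ℝ) (z : Fin 4 → ℝ) : Fin 4 → ℝ :=
  ![-4*a*(z 2)*(z 0) - 6*a*(z 3)*(z 1) + 48*(z 2)*(a*(z 2)+ω)*(z 1)/(z 3),
    0,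
    -(1/2)*a*(z 3)^2 - 3*(z 0)*(z 1)/(z 3) - 3*ω*(z 2),
    -6*(z 1)^2/(z 3) + (8*a*(z 2)+3*ω)*(z 3)]

/-- Jacobian matrix `(J_X)^i_j = ∂X^i/∂z^j`. -/
noncomputable def JXKK (a ω : ℝ) (z : Fin 4 → ℝ) : Matrix (Fin 4) (Fin 4) ℝ :=
  Matrix.of fun i j => pd j (fun w => XKK a ω w i) z

/-- The deformed Poisson tensor `P₁` for the Kaup–Kupershmidt system. -/
noncomputable def P1KK (a ω : ℝ) (z : Fin 4 → ℝ) : Matrix (Fin 4) (Fin 4) ℝ :=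
  let px := z 0; let py := z 1; let x := z 2; let y := z 3
  !![0, 6*py*(a*y^2 + 8*x*(a*x+ω))/y^2, -(4*a*x+3*ω), 2*(a*y^2 + 24*x*(a*x+ω))/y;
     -(6*py*(a*y^2 + 8*x*(a*x+ω))/y^2), 0, -(a*y) + 3*px*py/y^2, 8*a*x + 3*ω + 6*py^2/y^2;
     4*a*x+3*ω, a*y - 3*px*py/y^2, 0, -(3*px)/y;
     -(2*(a*y^2 + 24*x*(a*x+ω))/y), -(8*a*x + 3*ω + 6*py^2/y^2), 3*px/y, 0]

lemma pd_eq {f : (Fin 4 → ℝ) → ℝ} {L : (Fin 4 → ℝ) →L[ℝ] ℝ} {z : Fin 4 → ℝ}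
    (h : HasFDerivAt f L z) (l : Fin 4) : pd l f z = L (Pi.single l 1) := by
  rw [pd, h.fderiv]

lemma hfd_div {f g : (Fin 4 → ℝ) → ℝ} {f' g' : (Fin 4 → ℝ) →L[ℝ] ℝ} {x : Fin 4 → ℝ}
    (hf : HasFDerivAt f f' x) (hg : HasFDerivAt g g' x) (h : g x ≠ 0) :
    HasFDerivAt (fun w => f w / g w)
      ((g x)⁻¹ • f' - (f x / (g x)^2) • g') x := by
  have hinv : HasDerivAt (fun t : ℝ => t⁻¹) (-((g x)^2)⁻¹) (g x) := hasDerivAt_inv h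
  have h2 : HasFDerivAt (fun w => (g w)⁻¹) ((-((g x)^2)⁻¹) • g') x :=
    hinv.comp_hasFDerivAt x hg
  have : HasFDerivAt (fun w => f w * (g w)⁻¹) (f x • ((-((g x)^2)⁻¹) • g') + (g x)⁻¹ • f') x := hf.mul h2
  simp only [div_eq_mul_inv]
  convert this using 1
  ext v
  simp only [ContinuousLinearMap.sub_apply, ContinuousLinearMap.add_apply,
    ContinuousLinearMap.smul_apply, smul_eq_mul]
  field_simp
  ring

lemma hfd_sq {g : (Fin 4 → ℝ) → ℝ} {g' : (Fin 4 → ℝ) →L[ℝ] ℝ} {x : Fin 4 → ℝ}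
    (hg : HasFDerivAt g g' x) :
    HasFDerivAt (fun w => (g w)^2) ((2 * g x) • g') x := by
  have : HasFDerivAt (fun w => g w * g w) (g x • g' + g x • g') x := hg.mul hg
  convert this using 1
  · ext w; ring
  · ext v
    simp only [ContinuousLinearMap.add_apply, ContinuousLinearMap.smul_apply, smul_eq_mul]
    ring


set_option maxHeartbeats 2000000 in
/-- `−(J_X·P₀ + P₀·J_Xᵀ) = P₁_KK` at every point with `y ≠ 0`. -/
theorem lie_deriv_P0_eq_P1KK (a ω : ℝ) (z : Fin 4 → ℝ) (hy : z 3 ≠ 0) :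
    -(JXKK a ω z * P0 + P0 * (JXKK a ω z)ᵀ) = P1KK a ω z := by
  have h0 : HasFDerivAt (fun w : Fin 4 → ℝ => w 0)
      (ContinuousLinearMap.proj (R := ℝ) (φ := fun _ : Fin 4 => ℝ) 0) z :=
    by exact (ContinuousLinearMap.proj (R := ℝ) (φ := fun _ : Fin 4 => ℝ) _).hasFDerivAt
  have h1 : HasFDerivAt (fun w : Fin 4 → ℝ => w 1)
      (ContinuousLinearMap.proj (R := ℝ) (φ := fun _ : Fin 4 => ℝ) 1) z :=
    by exact (ContinuousLinearMap.proj (R := ℝ) (φ := fun _ : Fin 4 => ℝ) _).hasFDerivAt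
  have h2 : HasFDerivAt (fun w : Fin 4 → ℝ => w 2)
      (ContinuousLinearMap.proj (R := ℝ) (φ := fun _ : Fin 4 => ℝ) 2) z :=
    by exact (ContinuousLinearMap.proj (R := ℝ) (φ := fun _ : Fin 4 => ℝ) _).hasFDerivAt
  have h3 : HasFDerivAt (fun w : Fin 4 → ℝ => w 3)
      (ContinuousLinearMap.proj (R := ℝ) (φ := fun _ : Fin 4 => ℝ) 3) z :=
    by exact (ContinuousLinearMap.proj (R := ℝ) (φ := fun _ : Fin 4 => ℝ) _).hasFDerivAt
  have hd0 := (((h2.const_mul (-4*a)).mul h0).sub ((h3.const_mul (6*a)).mul h1)).add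
    (hfd_div (((h2.const_mul 48).mul ((h2.const_mul a).add_const ω)).mul h1) h3 hy)
  have hd1 : HasFDerivAt (fun _ : Fin 4 → ℝ => (0:ℝ)) (0 : (Fin 4 → ℝ) →L[ℝ] ℝ) z := hasFDerivAt_const 0 z
  have hd2 := (((hfd_sq h3).const_mul (-(1/2)*a)).sub
    (hfd_div ((h0.const_mul 3).mul h1) h3 hy)).sub (h2.const_mul (3*ω))
  have hd3 := (hfd_div ((hfd_sq h1).const_mul (-6)) h3 hy).add
    (((h2.const_mul (8*a)).add_const (3*ω)).mul h3)
  have hd0' : HasFDerivAt (fun w => XKK a ω w 0) _ z := hd0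
  have hd1' : HasFDerivAt (fun w => XKK a ω w 1) _ z := hd1
  have hd2' : HasFDerivAt (fun w => XKK a ω w 2) _ z := hd2
  have hd3' : HasFDerivAt (fun w => XKK a ω w 3) _ z := hd3
  have hJ : JXKK a ω z =
      !![-4*a*(z 2), -6*a*(z 3) + 48*(z 2)*(a*(z 2)+ω)/(z 3),
         -4*a*(z 0) + (96*a*(z 2)+48*ω)*(z 1)/(z 3),
         -6*a*(z 1) - 48*(z 2)*(a*(z 2)+ω)*(z 1)/(z 3)^2;
         0, 0, 0, 0;
         -3*(z 1)/(z 3), -3*(z 0)/(z 3), -3*ω, -a*(z 3) + 3*(z 0)*(z 1)/(z 3)^2;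
         0, -12*(z 1)/(z 3), 8*a*(z 3), 6*(z 1)^2/(z 3)^2 + 8*a*(z 2) + 3*ω] := by
    ext i j
    fin_cases i <;> fin_cases j <;>
      simp only [show (⟨0, by omega⟩:Fin 4) = 0 from rfl, show (⟨1, by omega⟩:Fin 4) = 1 from rfl,
        show (⟨2, by omega⟩:Fin 4) = 2 from rfl, show (⟨3, by omega⟩:Fin 4) = 3 from rfl] <;>
      simp only [JXKK, Matrix.of_apply, pd_eq hd0', pd_eq hd1', pd_eq hd2', pd_eq hd3'] <;>
      simp only [ContinuousLinearMap.add_apply, ContinuousLinearMap.sub_apply,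
        ContinuousLinearMap.smul_apply, ContinuousLinearMap.proj_apply,
        ContinuousLinearMap.zero_apply, smul_eq_mul, Pi.single_apply] <;>
      simp [Matrix.vecHead, Matrix.vecTail] <;> (try field_simp) <;> (try ring) <;> (try tauto)
  rw [hJ]
  ext i j
  fin_cases i <;> fin_cases j <;>
    simp only [show (⟨0, by omega⟩:Fin 4) = 0 from rfl, show (⟨1, by omega⟩:Fin 4) = 1 from rfl,
        show (⟨2, by omega⟩:Fin 4) = 2 from rfl, show (⟨3, by omega⟩:Fin 4) = 3 from rfl] <;>
      simp only [Matrix.neg_apply, Matrix.add_apply, Matrix.mul_apply, Fin.sum_univ_four,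
      Matrix.transpose_apply, P0, P1KK] <;>
    simp [Matrix.vecHead, Matrix.vecTail] <;> (try field_simp) <;> (try ring) <;> (try tauto)
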